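/- The elliptic Artin monoid M'(Ẽ₆^{(1,1)}) is cancellative: for all elements u, v, w of M'(Ẽ₆^{(1,1)}), u·v = u·w implies v = w, and v·u = w·u implies v = w. -/

import Mathlib

/-!
STATEMENT 17: The elliptic Artin monoid `M'(Ẽ₆^{(1,1)})` is cancellative.
-/

namespace EllipticE6Monoid

/-- Generators: `Sum.inl i` is `tᵢ` (`i ∈ ℤ`), `Sum.inr j` is `s_(j+1)`
(so `Sum.inr 0` is `s₁`, ..., `Sum.inr 5` is `s₆`). -/
abbrev S : Type := ℤ ⊕ Fin 6

def t (i : ℤ) : FreeMonoid S := FreeMonoid.of (Sum.inl i)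
def s (j : Fin 6) : FreeMonoid S := FreeMonoid.of (Sum.inr j)

/-- The pairs of (0-indexed) `s`-generators joined by an edge in the diagram,
i.e. satisfying a braid relation: (s₁,s₄), (s₂,s₅), (s₃,s₆). -/
def braidPairs : List (Fin 6 × Fin 6) := [(0, 3), (1, 4), (2, 5)]

/-- The defining relations of `M'(Ẽ₆^{(1,1)})`:
`tᵢsⱼtᵢ = sⱼtᵢsⱼ` for `i ∈ ℤ` and `j ∈ {1,2,3}`;
`tᵢtᵢ₋₁ = tⱼtⱼ₋₁` for all `i, j ∈ ℤ`;
braid relations `xyx = yxy` along the edges of the `s`-part of the diagram;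
commutation relations between the remaining pairs of distinct `s`-generators;
and commutation of every `tᵢ` with `s₄, …, s₆`. -/
def rels : FreeMonoid S → FreeMonoid S → Prop := fun a b =>
  (∃ i : ℤ, ∃ j : Fin 6, j.val < 3 ∧ a = t i * s j * t i ∧ b = s j * t i * s j) ∨
  (∃ i j : ℤ, a = t i * t (i - 1) ∧ b = t j * t (j - 1)) ∨
  (∃ q ∈ braidPairs, a = s q.1 * s q.2 * s q.1 ∧ b = s q.2 * s q.1 * s q.2) ∨
  (∃ i j : Fin 6, i ≠ j ∧ (i, j) ∉ braidPairs ∧ (j, i) ∉ braidPairs ∧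
    a = s i * s j ∧ b = s j * s i) ∨
  (∃ i : ℤ, ∃ j : Fin 6, 3 ≤ j.val ∧ a = t i * s j ∧ b = s j * t i)

/-- The elliptic Artin monoid `M'(Ẽ₆^{(1,1)})`. -/
abbrev M := PresentedMonoid rels

/-! ### Infrastructure -/

abbrev W : Type := FreeMonoid S

open FreeMonoid

/-- The congruence generated by the defining relations. -/
def K : Con W := conGen rels

lemma kOf {a b : W} (h : rels a b) : K a b := ConGen.Rel.of _ _ h

lemma kStep {a b : W} (h : rels a b ∨ rels b a) : K a b :=
  h.elim kOf fun h' => (kOf h').symm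

/-- Rewriting inside a context. -/
lemma rw_at (p : W) {a b : W} (q : W) (h : K a b) : K (p * (a * q)) (p * (b * q)) :=
  K.mul (K.refl p) (K.mul h (K.refl q))

/-- `tᵢ tᵢ₋₁ = tⱼ tⱼ₋₁`. -/
lemma rc_tt (i j : ℤ) : K (t i * t (i - 1)) (t j * t (j - 1)) :=
  kOf (Or.inr (Or.inl ⟨i, j, rfl, rfl⟩))

/-- braid relation between `tᵢ` and `sⱼ`, `j < 3`. -/
lemma rc_tst (i : ℤ) {j : Fin 6} (hj : j.val < 3) :
    K (t i * (s j * t i)) (s j * (t i * s j)) :=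
  kOf (Or.inl ⟨i, j, hj, by rw [mul_assoc], by rw [mul_assoc]⟩)

/-- commutation of `tᵢ` and `sⱼ`, `j ≥ 3`. -/
lemma rc_ts (i : ℤ) {j : Fin 6} (hj : 3 ≤ j.val) : K (t i * s j) (s j * t i) :=
  kOf (Or.inr (Or.inr (Or.inr (Or.inr ⟨i, j, hj, rfl, rfl⟩))))

/-- Adjacency (braid edge) among the `s`-generators. -/
def adjP (a b : Fin 6) : Prop := (a, b) ∈ braidPairs ∨ (b, a) ∈ braidPairs

instance : DecidablePred fun p : Fin 6 × Fin 6 => adjP p.1 p.2 := fun _ => by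
  unfold adjP; infer_instance

instance (a b : Fin 6) : Decidable (adjP a b) := by unfold adjP; infer_instance

lemma rc_ss_braid {a b : Fin 6} (h : adjP a b) :
    K (s a * (s b * s a)) (s b * (s a * s b)) := by
  rcases h with h | h
  · exact kOf (Or.inr (Or.inr (Or.inl ⟨(a, b), h, by rw [mul_assoc], by rw [mul_assoc]⟩)))
  · exact (kOf (Or.inr (Or.inr (Or.inl ⟨(b, a), h, by rw [mul_assoc], by rw [mul_assoc]⟩)))).symm

lemma rc_ss_comm {a b : Fin 6} (hne : a ≠ b) (h : ¬ adjP a b) :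
    K (s a * s b) (s b * s a) :=
  kOf (Or.inr (Or.inr (Or.inr (Or.inl
    ⟨a, b, hne, fun hm => h (Or.inl hm), fun hm => h (Or.inr hm), rfl, rfl⟩))))

/-! ### The letterwise complement -/

def comp : S → S → W
  | .inl i, .inl j => if i = j then 1 else t (i - 1)
  | .inl i, .inr b => if b.val < 3 then s b * t i else s b
  | .inr a, .inl i => if a.val < 3 then t i * s a else t i
  | .inr a, .inr b => if a = b then 1 else if adjP a b then s b * s a else s b

@[simp] lemma comp_self (u : S) : comp u u = 1 := by
  rcases u with i | a <;> simp [comp]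

lemma comp_ll {i j : ℤ} (h : i ≠ j) : comp (.inl i) (.inl j) = t (i - 1) := by
  simp [comp, h]

lemma comp_lr_lt (i : ℤ) {b : Fin 6} (h : b.val < 3) :
    comp (.inl i) (.inr b) = s b * t i := by simp [comp, h]

lemma comp_rl_lt (i : ℤ) {b : Fin 6} (h : b.val < 3) :
    comp (.inr b) (.inl i) = t i * s b := by simp [comp, h]

lemma comp_lr_ge (i : ℤ) {b : Fin 6} (h : 3 ≤ b.val) :
    comp (.inl i) (.inr b) = s b := by
  simp [comp, Nat.not_lt.mpr h]

lemma comp_rl_ge (i : ℤ) {b : Fin 6} (h : 3 ≤ b.val) :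
    comp (.inr b) (.inl i) = t i := by
  simp [comp, Nat.not_lt.mpr h]

lemma adjP_ne {a b : Fin 6} (h : adjP a b) : a ≠ b := by
  revert h; revert a b; decide

lemma comp_rr_adj {a b : Fin 6} (h : adjP a b) :
    comp (.inr a) (.inr b) = s b * s a := by
  simp [comp, adjP_ne h, h]

lemma comp_rr_nadj {a b : Fin 6} (hne : a ≠ b) (h : ¬ adjP a b) :
    comp (.inr a) (.inr b) = s b := by
  simp [comp, hne, h]

/-! ### One-step rewriting and chains -/

def OneStep (u v : W) : Prop :=
  ∃ a b p q : W, (rels a b ∨ rels b a) ∧ u = p * a * q ∧ v = p * b * q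

lemma OneStep.symm' {u v : W} (h : OneStep u v) : OneStep v u := by
  obtain ⟨a, b, p, q, hr, hu, hv⟩ := h
  exact ⟨b, a, p, q, hr.symm, hv, hu⟩

lemma onestep_symm : Symmetric OneStep := fun _ _ h => h.symm'

abbrev Chain : W → W → Prop := Relation.ReflTransGen OneStep

lemma chain_mul_right {u u' : W} (v : W) (h : Chain u u') : Chain (u * v) (u' * v) := by
  refine Relation.ReflTransGen.lift (· * v) (fun a b hab => ?_) _ _ h
  obtain ⟨x, y, p, q, hr, ha, hb⟩ := hab
  exact ⟨x, y, p, q * v, hr, by simp [ha, mul_assoc], by simp [hb, mul_assoc]⟩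

lemma chain_mul_left {u u' : W} (v : W) (h : Chain u u') : Chain (v * u) (v * u') := by
  refine Relation.ReflTransGen.lift (v * ·) (fun a b hab => ?_) _ _ h
  obtain ⟨x, y, p, q, hr, ha, hb⟩ := hab
  exact ⟨x, y, v * p, q, hr, by simp [ha, mul_assoc], by simp [hb, mul_assoc]⟩

lemma chain_of_K {u v : W} (h : K u v) : Chain u v := by
  have h' : ConGen.Rel rels u v := h
  clear h
  induction h' with
  | of a b hab =>
      exact Relation.ReflTransGen.single
        ⟨a, b, 1, 1, Or.inl hab, by rw [one_mul, mul_one], by rw [one_mul, mul_one]⟩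
  | refl x => exact Relation.ReflTransGen.refl
  | symm _ ih => exact (haveI : Std.Symm OneStep := ⟨onestep_symm⟩; Std.Symm.symm _ _ ih)
  | trans _ _ ih1 ih2 => exact ih1.trans ih2
  | mul _ _ ih1 ih2 =>
      exact (chain_mul_right _ ih1).trans (chain_mul_left _ ih2)

lemma K_of_step {u v : W} (h : OneStep u v) : K u v := by
  obtain ⟨a, b, p, q, hr, hu, hv⟩ := h
  rw [hu, hv]
  exact K.mul (K.mul (K.refl p) (kStep hr)) (K.refl q)

lemma K_of_chain {u v : W} (h : Chain u v) : K u v := by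
  induction h with
  | refl => exact K.refl _
  | tail _ hstep ih => exact ih.trans (K_of_step hstep)

/-! ### Length -/

@[simp] lemma length_t (i : ℤ) : (t i).length = 1 := rfl
@[simp] lemma length_s (j : Fin 6) : (s j).length = 1 := rfl

lemma rels_length {a b : W} (h : rels a b) : a.length = b.length := by
  rcases h with ⟨i, j, _, ha, hb⟩ | ⟨i, j, ha, hb⟩ | ⟨q, _, ha, hb⟩ |
    ⟨i, j, _, _, _, ha, hb⟩ | ⟨i, j, _, ha, hb⟩ <;>
    subst ha <;> subst hb <;> simp [FreeMonoid.length_mul]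

lemma K_length {u v : W} (h : K u v) : u.length = v.length := by
  have h' : ConGen.Rel rels u v := h
  clear h
  induction h' with
  | of a b hab => exact rels_length hab
  | refl x => rfl
  | symm _ ih => exact ih.symm
  | trans _ _ ih1 ih2 => exact ih1.trans ih2
  | mul _ _ ih1 ih2 => simp [FreeMonoid.length_mul, ih1, ih2]

lemma step_length {u v : W} (h : OneStep u v) : u.length = v.length :=
  K_length (K_of_step h)

/-! ### Decomposition of relations via the complement -/

lemma step_decomp {a b : W} (h : rels a b ∨ rels b a) :
    a = b ∨ ∃ z w : S, z ≠ w ∧ a = .of z * comp z w ∧ b = .of w * comp w z := by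
  have aux : ∀ {a b : W}, rels a b →
      a = b ∨ ∃ z w : S, z ≠ w ∧ a = .of z * comp z w ∧ b = .of w * comp w z := by
    intro a b hab
    rcases hab with ⟨i, j, hj, ha, hb⟩ | ⟨i, j, ha, hb⟩ | ⟨q, hq, ha, hb⟩ |
      ⟨i, j, hne, hnb1, hnb2, ha, hb⟩ | ⟨i, j, hj, ha, hb⟩
    · refine Or.inr ⟨.inl i, .inr j, by simp, ?_, ?_⟩
      · rw [ha, comp_lr_lt i hj, mul_assoc]; rfl
      · rw [hb, comp_rl_lt i hj, mul_assoc]; rfl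
    · by_cases hij : i = j
      · subst hij; exact Or.inl (ha.trans hb.symm)
      · refine Or.inr ⟨.inl i, .inl j, by simp [hij], ?_, ?_⟩
        · rw [ha, comp_ll hij]; rfl
        · rw [hb, comp_ll (Ne.symm hij)]; rfl
    · have hq' : q = (0, 3) ∨ q = (1, 4) ∨ q = (2, 5) := by
        simpa [braidPairs] using hq
      have hadj : adjP q.1 q.2 := Or.inl hq
      refine Or.inr ⟨.inr q.1, .inr q.2, by simp [adjP_ne hadj], ?_, ?_⟩
      · rw [ha, comp_rr_adj hadj, mul_assoc]; rfl
      · have : adjP q.2 q.1 := Or.inr hq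
        rw [hb, comp_rr_adj this, mul_assoc]; rfl
    · have hnadj : ¬ adjP i j := fun h => h.elim hnb1 hnb2
      refine Or.inr ⟨.inr i, .inr j, by simp [hne], ?_, ?_⟩
      · rw [ha, comp_rr_nadj hne hnadj]; rfl
      · rw [hb, comp_rr_nadj (Ne.symm hne) (fun h => hnadj (h.elim Or.inr Or.inl))]; rfl
    · refine Or.inr ⟨.inl i, .inr j, by simp, ?_, ?_⟩
      · rw [ha, comp_lr_ge i hj]; rfl
      · rw [hb, comp_rl_ge i hj]; rfl
  rcases h with h | h
  · exact aux h
  · rcases aux h with he | ⟨z, w, hne, hb', ha'⟩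
    · exact Or.inl he.symm
    · exact Or.inr ⟨w, z, hne.symm, ha', hb'⟩

/-! ### word helpers -/

lemma word_cases (p : W) : p = 1 ∨ ∃ d p', p = FreeMonoid.of d * p' := by
  rcases hp : p.toList with _ | ⟨d, l⟩
  · left
    have := congrArg FreeMonoid.ofList hp
    simpa [FreeMonoid.ofList_toList] using this
  · right
    refine ⟨d, FreeMonoid.ofList l, ?_⟩
    have := congrArg FreeMonoid.ofList hp
    rw [FreeMonoid.ofList_toList] at this
    rw [this, FreeMonoid.ofList_cons]

lemma cons_inj {a b : S} {u v : W} (h : FreeMonoid.of a * u = FreeMonoid.of b * v) :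
    a = b ∧ u = v := by
  have h' := congrArg FreeMonoid.toList h
  rw [FreeMonoid.toList_of_mul, FreeMonoid.toList_of_mul] at h'
  have h1 : a = b := (List.cons.injEq ..).mp h' |>.1
  have h2 : FreeMonoid.toList u = FreeMonoid.toList v := (List.cons.injEq ..).mp h' |>.2
  refine ⟨h1, ?_⟩
  have := congrArg FreeMonoid.ofList h2
  simpa [FreeMonoid.ofList_toList] using this



abbrev ov : S → W := FreeMonoid.of

/-! ### Pair classes -/

/-- `u` and `v` commute. -/
def Comm (u v : S) : Prop :=
  comp u v = ov v ∧ comp v u = ov u ∧ K (ov u * ov v) (ov v * ov u)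

/-- `u` and `v` satisfy a braid relation. -/
def Braid (u v : S) : Prop :=
  comp u v = ov v * ov u ∧ comp v u = ov u * ov v ∧
    K (ov u * (ov v * ov u)) (ov v * (ov u * ov v))

lemma Comm.symm' {u v : S} (h : Comm u v) : Comm v u := ⟨h.2.1, h.1, h.2.2.symm⟩

lemma Braid.symm' {u v : S} (h : Braid u v) : Braid v u := ⟨h.2.1, h.1, h.2.2.symm⟩

lemma braid_TA (i : ℤ) {b : Fin 6} (hb : b.val < 3) : Braid (.inl i) (.inr b) :=
  ⟨comp_lr_lt i hb, comp_rl_lt i hb, rc_tst i hb⟩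

lemma comm_TB (i : ℤ) {b : Fin 6} (hb : 3 ≤ b.val) : Comm (.inl i) (.inr b) :=
  ⟨comp_lr_ge i hb, comp_rl_ge i hb, rc_ts i hb⟩

lemma adjP_symm {a b : Fin 6} (h : adjP a b) : adjP b a := h.elim Or.inr Or.inl

lemma braid_SS {a b : Fin 6} (h : adjP a b) : Braid (.inr a) (.inr b) :=
  ⟨comp_rr_adj h, comp_rr_adj (adjP_symm h), rc_ss_braid h⟩

lemma comm_SS {a b : Fin 6} (hne : a ≠ b) (h : ¬ adjP a b) : Comm (.inr a) (.inr b) :=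
  ⟨comp_rr_nadj hne h, comp_rr_nadj (Ne.symm hne) (fun h' => h (adjP_symm h')),
    rc_ss_comm hne h⟩

lemma adjP_low {a b : Fin 6} (ha : a.val < 3) (hb : b.val < 3) : ¬ adjP a b := by
  revert ha hb; revert a b; decide

lemma adjP_high {a b : Fin 6} (ha : 3 ≤ a.val) (hb : 3 ≤ b.val) : ¬ adjP a b := by
  revert ha hb; revert a b; decide

lemma adjP_unique {a b c : Fin 6} (h1 : adjP a b) (h2 : adjP a c) : b = c := by
  revert h1 h2; revert a b c; decide

/-! ### The key property -/

def KeyP (L : ℕ) : Prop := ∀ (x : S) (X : W) (y : S) (Y : W),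
  (FreeMonoid.of x * X).length = L → K (ov x * X) (ov y * Y) →
  ∃ Z, K X (comp x y * Z) ∧ K Y (comp y x * Z)

@[simp] lemma length_ofList (l : List S) : (FreeMonoid.ofList l).length = l.length := rfl

section CubeSection

variable {L : ℕ}

lemma strip (hIH : ∀ L' < L, KeyP L') {a : S} {u : W} {b : S} {v : W}
    (hl : (FreeMonoid.of a * u).length < L) (h : K (ov a * u) (ov b * v)) :
    ∃ Z, K u (comp a b * Z) ∧ K v (comp b a * Z) :=
  hIH _ hl a u b v rfl h

lemma cancel1 (hIH : ∀ L' < L, KeyP L') {a : S} {u v : W}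
    (hl : (FreeMonoid.of a * u).length < L) (h : K (ov a * u) (ov a * v)) : K u v := by
  obtain ⟨Z, h1, h2⟩ := strip hIH hl h
  rw [comp_self, one_mul] at h1 h2
  exact h1.trans h2.symm

lemma cancel_list (hIH : ∀ L' < L, KeyP L') : ∀ (l : List S) (u v : W),
    (FreeMonoid.ofList l * u).length < L →
    K (FreeMonoid.ofList l * u) (FreeMonoid.ofList l * v) → K u v := by
  intro l
  induction l with
  | nil => intro u v _ h; exact h
  | cons d l ihl =>
      intro u v hlen h
      have h' : K (FreeMonoid.of d * (FreeMonoid.ofList l * u))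
          (FreeMonoid.of d * (FreeMonoid.ofList l * v)) := h
      have hlen' : (FreeMonoid.of d * (FreeMonoid.ofList l * u)).length < L := hlen
      have hlen'' : (FreeMonoid.ofList l * u).length < L := by
        simp only [FreeMonoid.length_mul, FreeMonoid.length_of, length_ofList] at hlen' ⊢
        omega
      exact ihl u v hlen'' (cancel1 hIH hlen' h')

/-! ### Cube condition, abstract cases -/

lemma G1 (hIH : ∀ L' < L, KeyP L') {x y w : S} (cxy : Comm x y) (cxw : Comm x w)
    (cyw : Comm y w) (q Z₁ : W) (hlen : (comp w x * q).length < L)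
    (H : K (comp w x * q) (comp w y * Z₁)) :
    ∃ Z, K (comp x w * q) (comp x y * Z) ∧ K (comp y w * Z₁) (comp y x * Z) := by
  obtain ⟨exy, eyx, kxy⟩ := cxy
  obtain ⟨exw, ewx, kxw⟩ := cxw
  obtain ⟨eyw, ewy, kyw⟩ := cyw
  rw [ewx] at H hlen
  rw [ewy] at H
  rw [exw, exy, eyw, eyx]
  obtain ⟨Z₂, h1, h2⟩ := strip hIH hlen H
  rw [exy] at h1
  rw [eyx] at h2
  refine ⟨ov w * Z₂, ?_, ?_⟩
  · exact (K.mul (K.refl (ov w)) h1).trans (rw_at 1 Z₂ kyw.symm)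
  · exact (K.mul (K.refl (ov w)) h2).trans (rw_at 1 Z₂ kxw.symm)

lemma G7 (hIH : ∀ L' < L, KeyP L') {x y w : S} (bxy : Braid x y) (cxw : Comm x w)
    (cyw : Comm y w) (q Z₁ : W) (hlen : (comp w x * q).length < L)
    (H : K (comp w x * q) (comp w y * Z₁)) :
    ∃ Z, K (comp x w * q) (comp x y * Z) ∧ K (comp y w * Z₁) (comp y x * Z) := by
  obtain ⟨exy, eyx, kxy⟩ := bxy
  obtain ⟨exw, ewx, kxw⟩ := cxw
  obtain ⟨eyw, ewy, kyw⟩ := cyw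
  rw [ewx] at H hlen
  rw [ewy] at H
  rw [exw, exy, eyw, eyx]
  obtain ⟨Z₂, h1, h2⟩ := strip hIH hlen H
  rw [exy, mul_assoc] at h1
  rw [eyx, mul_assoc] at h2
  refine ⟨ov w * Z₂, ?_, ?_⟩
  · exact (K.mul (K.refl (ov w)) h1).trans
      ((rw_at 1 (ov x * Z₂) kyw.symm).trans (rw_at (ov y) Z₂ kxw.symm))
  · exact (K.mul (K.refl (ov w)) h2).trans
      ((rw_at 1 (ov y * Z₂) kxw.symm).trans (rw_at (ov x) Z₂ kyw.symm))

lemma G6 (hIH : ∀ L' < L, KeyP L') {x y w : S} (cxy : Comm x y) (bxw : Braid x w)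
    (cyw : Comm y w) (q Z₁ : W) (hlen : (comp w x * q).length < L)
    (H : K (comp w x * q) (comp w y * Z₁)) :
    ∃ Z, K (comp x w * q) (comp x y * Z) ∧ K (comp y w * Z₁) (comp y x * Z) := by
  obtain ⟨exy, eyx, kxy⟩ := cxy
  obtain ⟨exw, ewx, kxw⟩ := bxw
  obtain ⟨eyw, ewy, kyw⟩ := cyw
  rw [ewx, mul_assoc] at H hlen
  rw [ewy] at H
  rw [exw, exy, eyw, eyx]
  obtain ⟨Z₂, h1, h2⟩ := strip hIH hlen H
  rw [exy] at h1
  rw [eyx] at h2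
  have hlen2 : (FreeMonoid.of w * q).length < L := by
    simp only [FreeMonoid.length_mul, FreeMonoid.length_of] at hlen ⊢; omega
  obtain ⟨Z₃, h3, h4⟩ := strip hIH hlen2 h1
  rw [ewy] at h3
  rw [eyw] at h4
  refine ⟨ov w * (ov x * Z₃), ?_, ?_⟩
  · exact (K.mul (K.refl (ov w * ov x)) h3).trans
      ((rw_at (ov w) Z₃ kxy).trans (rw_at 1 (ov x * Z₃) kyw.symm))
  · exact (K.mul (K.refl (ov w)) (h2.trans (K.mul (K.refl (ov x)) h4))).trans
      (rw_at 1 Z₃ kxw.symm)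

lemma G5 (hIH : ∀ L' < L, KeyP L') {x y w : S} (bxy : Braid x y) (bxw : Braid x w)
    (cyw : Comm y w) (q Z₁ : W) (hlen : (comp w x * q).length < L)
    (H : K (comp w x * q) (comp w y * Z₁)) :
    ∃ Z, K (comp x w * q) (comp x y * Z) ∧ K (comp y w * Z₁) (comp y x * Z) := by
  obtain ⟨exy, eyx, kxy⟩ := bxy
  obtain ⟨exw, ewx, kxw⟩ := bxw
  obtain ⟨eyw, ewy, kyw⟩ := cyw
  rw [ewx, mul_assoc] at H hlen
  rw [ewy] at H
  rw [exw, exy, eyw, eyx]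
  obtain ⟨Z₂, h1, h2⟩ := strip hIH hlen H
  rw [exy, mul_assoc] at h1
  rw [eyx, mul_assoc] at h2
  have hlen2 : (FreeMonoid.of w * q).length < L := by
    simp only [FreeMonoid.length_mul, FreeMonoid.length_of] at hlen ⊢; omega
  obtain ⟨Z₃, h3, h4⟩ := strip hIH hlen2 h1
  rw [ewy] at h3
  rw [eyw] at h4
  have hlen3 : (FreeMonoid.of x * Z₂).length < L := by
    have e1 := K_length h1
    simp only [FreeMonoid.length_mul, FreeMonoid.length_of] at hlen e1 ⊢; omega
  obtain ⟨Z₄, h5, h6⟩ := strip hIH hlen3 h4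
  rw [exw, mul_assoc] at h5
  rw [ewx, mul_assoc] at h6
  have hq : K q (ov y * (ov x * (ov w * Z₄))) := h3.trans (K.mul (K.refl _) h6)
  have hZ₁ : K Z₁ (ov x * (ov y * (ov w * (ov x * Z₄)))) :=
    h2.trans (K.mul (K.refl _) (K.mul (K.refl _) h5))
  refine ⟨ov w * (ov x * (ov y * Z₄)), ?_, ?_⟩
  · exact (K.mul (K.refl (ov w * ov x)) hq).trans
      (((rw_at (ov w) (ov w * Z₄) kxy).trans
        (rw_at (ov w * (ov y * ov x)) Z₄ kyw)).trans
        ((rw_at 1 (ov x * (ov w * (ov y * Z₄))) kyw.symm).trans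
          (rw_at (ov y) (ov y * Z₄) kxw.symm)))
  · exact (K.mul (K.refl (ov w)) hZ₁).trans
      ((((rw_at (ov w * ov x) (ov x * Z₄) kyw).trans
        (rw_at 1 (ov y * (ov x * Z₄)) kxw.symm)).trans
        ((rw_at (ov x * ov w) Z₄ kxy).trans
          (rw_at (ov x) (ov x * (ov y * Z₄)) kyw.symm))))

lemma G4 (hIH : ∀ L' < L, KeyP L') {x y w : S} (cxy : Comm x y) (bxw : Braid x w)
    (byw : Braid y w) (q Z₁ : W) (hlen : (comp w x * q).length < L)
    (H : K (comp w x * q) (comp w y * Z₁)) :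
    ∃ Z, K (comp x w * q) (comp x y * Z) ∧ K (comp y w * Z₁) (comp y x * Z) := by
  obtain ⟨exy, eyx, kxy⟩ := cxy
  obtain ⟨exw, ewx, kxw⟩ := bxw
  obtain ⟨eyw, ewy, kyw⟩ := byw
  rw [ewx, mul_assoc] at H hlen
  rw [ewy, mul_assoc] at H
  rw [exw, exy, eyw, eyx]
  obtain ⟨Z₂, h1, h2⟩ := strip hIH hlen H
  rw [exy] at h1
  rw [eyx] at h2
  have hlen2 : (FreeMonoid.of w * q).length < L := by
    simp only [FreeMonoid.length_mul, FreeMonoid.length_of] at hlen ⊢; omega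
  obtain ⟨Z₃, h3, h4⟩ := strip hIH hlen2 h1
  rw [ewy, mul_assoc] at h3
  rw [eyw, mul_assoc] at h4
  have e0 := K_length H
  have hlen3 : (FreeMonoid.of w * Z₁).length < L := by
    simp only [FreeMonoid.length_mul, FreeMonoid.length_of] at hlen e0 ⊢; omega
  have h2' : K (ov w * Z₁) (ov x * (ov w * (ov y * Z₃))) :=
    h2.trans (K.mul (K.refl _) h4)
  obtain ⟨Z₄, h5, h6⟩ := strip hIH hlen3 h2'
  rw [ewx, mul_assoc] at h5
  rw [exw, mul_assoc] at h6
  have e1 := K_length h1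
  have hlen4 : (FreeMonoid.of w * (ov y * Z₃)).length < L := by
    have e2 := K_length h4
    simp only [FreeMonoid.length_mul, FreeMonoid.length_of] at hlen e1 e2 ⊢; omega
  have hc : K (ov y * Z₃) (ov x * Z₄) := cancel1 hIH hlen4 h6
  have hlen5 : (FreeMonoid.of y * Z₃).length < L := by
    have e2 := K_length h4
    simp only [FreeMonoid.length_mul, FreeMonoid.length_of] at hlen e1 e2 ⊢; omega
  obtain ⟨Z₅, h7, h8⟩ := strip hIH hlen5 hc
  rw [eyx] at h7
  rw [exy] at h8
  have hq : K q (ov y * (ov w * (ov x * Z₅))) :=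
    h3.trans (K.mul (K.refl _) (K.mul (K.refl _) h7))
  have hZ₁ : K Z₁ (ov x * (ov w * (ov y * Z₅))) :=
    h5.trans (K.mul (K.refl _) (K.mul (K.refl _) h8))
  refine ⟨ov w * (ov y * (ov x * (ov w * Z₅))), ?_, ?_⟩
  · exact (K.mul (K.refl (ov w * ov x)) hq).trans
      (((rw_at (ov w) (ov w * (ov x * Z₅)) kxy).trans
        (rw_at (ov w * ov y) Z₅ kxw)).trans
        (rw_at 1 (ov x * (ov w * Z₅)) kyw.symm))
  · exact (K.mul (K.refl (ov w * ov y)) hZ₁).trans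
      ((((rw_at (ov w) (ov w * (ov y * Z₅)) kxy.symm).trans
        (rw_at (ov w * ov x) Z₅ kyw)).trans
        (rw_at 1 (ov y * (ov w * Z₅)) kxw.symm)).trans
        (rw_at (ov x * ov w) (ov w * Z₅) kxy))

/-! ### Cube condition, concrete cases involving two or three `t`-letters -/

lemma C1 (hIH : ∀ L' < L, KeyP L') {i j k : ℤ} (hij : i ≠ j) (hik : i ≠ k) (hjk : j ≠ k)
    (q Z₁ : W) (hlen : (comp (.inl k) (.inl i) * q).length < L)
    (H : K (comp (.inl k) (.inl i) * q) (comp (.inl k) (.inl j) * Z₁)) :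
    ∃ Z, K (comp (.inl i) (.inl k) * q) (comp (.inl i) (.inl j) * Z) ∧
      K (comp (.inl j) (.inl k) * Z₁) (comp (.inl j) (.inl i) * Z) := by
  rw [comp_ll (Ne.symm hik)] at H hlen
  rw [comp_ll (Ne.symm hjk)] at H
  rw [comp_ll hik, comp_ll hij, comp_ll hjk, comp_ll (Ne.symm hij)]
  have hq : K q Z₁ := cancel1 hIH hlen H
  exact ⟨q, K.refl _, K.mul (K.refl _) hq.symm⟩

lemma C3 (hIH : ∀ L' < L, KeyP L') {i k : ℤ} (hik : i ≠ k) {b : Fin 6} (hb : 3 ≤ b.val)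
    (q Z₁ : W) (hlen : (comp (.inl k) (.inl i) * q).length < L)
    (H : K (comp (.inl k) (.inl i) * q) (comp (.inl k) (.inr b) * Z₁)) :
    ∃ Z, K (comp (.inl i) (.inl k) * q) (comp (.inl i) (.inr b) * Z) ∧
      K (comp (.inr b) (.inl k) * Z₁) (comp (.inr b) (.inl i) * Z) := by
  rw [comp_ll (Ne.symm hik)] at H hlen
  rw [comp_lr_ge k hb] at H
  rw [comp_ll hik, comp_lr_ge i hb, comp_rl_ge k hb, comp_rl_ge i hb]
  obtain ⟨Z₂, h1, h2⟩ := strip hIH hlen H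
  rw [comp_lr_ge (k-1) hb] at h1
  rw [comp_rl_ge (k-1) hb] at h2
  refine ⟨t (i-1) * Z₂, ?_, ?_⟩
  · exact (K.mul (K.refl (t (i-1))) h1).trans (rw_at 1 Z₂ (rc_ts (i-1) hb))
  · exact (K.mul (K.refl (t k)) h2).trans (rw_at 1 Z₂ (rc_tt k i))

lemma C15a (hIH : ∀ L' < L, KeyP L') {i j : ℤ} (hij : i ≠ j) {c : Fin 6} (hc : 3 ≤ c.val)
    (q Z₁ : W) (hlen : (comp (.inr c) (.inl i) * q).length < L)
    (H : K (comp (.inr c) (.inl i) * q) (comp (.inr c) (.inl j) * Z₁)) :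
    ∃ Z, K (comp (.inl i) (.inr c) * q) (comp (.inl i) (.inl j) * Z) ∧
      K (comp (.inl j) (.inr c) * Z₁) (comp (.inl j) (.inl i) * Z) := by
  rw [comp_rl_ge i hc] at H hlen
  rw [comp_rl_ge j hc] at H
  rw [comp_lr_ge i hc, comp_lr_ge j hc, comp_ll hij, comp_ll (Ne.symm hij)]
  obtain ⟨Z₂, h1, h2⟩ := strip hIH hlen H
  rw [comp_ll hij] at h1
  rw [comp_ll (Ne.symm hij)] at h2
  refine ⟨s c * Z₂, ?_, ?_⟩
  · exact (K.mul (K.refl (s c)) h1).trans (rw_at 1 Z₂ (rc_ts (i-1) hc).symm)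
  · exact (K.mul (K.refl (s c)) h2).trans (rw_at 1 Z₂ (rc_ts (j-1) hc).symm)

lemma C2 (hIH : ∀ L' < L, KeyP L') {i k : ℤ} (hik : i ≠ k) {b : Fin 6} (hb : b.val < 3)
    (q Z₁ : W) (hlen : (comp (.inl k) (.inl i) * q).length < L)
    (H : K (comp (.inl k) (.inl i) * q) (comp (.inl k) (.inr b) * Z₁)) :
    ∃ Z, K (comp (.inl i) (.inl k) * q) (comp (.inl i) (.inr b) * Z) ∧
      K (comp (.inr b) (.inl k) * Z₁) (comp (.inr b) (.inl i) * Z) := by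
  rw [comp_ll (Ne.symm hik)] at H hlen
  rw [comp_lr_lt k hb, mul_assoc] at H
  rw [comp_ll hik, comp_lr_lt i hb, comp_rl_lt k hb, comp_rl_lt i hb]
  obtain ⟨Z₂, h1, h2⟩ := strip hIH hlen H
  rw [comp_lr_lt (k-1) hb, mul_assoc] at h1
  rw [comp_rl_lt (k-1) hb, mul_assoc] at h2
  have e0 := K_length H
  have hlen2 : (t k * Z₁).length < L := by
    simp only [FreeMonoid.length_mul, FreeMonoid.length_of, length_t, length_s] at hlen e0 ⊢
    omega
  obtain ⟨Z₃, h3, h4⟩ := strip hIH hlen2 h2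
  rw [comp_ll (show k ≠ k - 1 by omega)] at h3
  rw [comp_ll (show k - 1 ≠ k by omega)] at h4
  have e1 := K_length h1
  have hlen3 : (s b * Z₂).length < L := by
    simp only [FreeMonoid.length_mul, FreeMonoid.length_of, length_t, length_s] at hlen e1 ⊢
    omega
  obtain ⟨Z₄, h5, h6⟩ := strip hIH hlen3 h4
  rw [comp_rl_lt (k-1-1) hb, mul_assoc] at h5
  rw [comp_lr_lt (k-1-1) hb, mul_assoc] at h6
  have hq : K q (s b * (t (k-1) * (t (k-1-1) * (s b * Z₄)))) :=
    h1.trans (K.mul (K.refl _) (K.mul (K.refl _) h5))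
  have hZ₁ : K Z₁ (t (k-1) * (s b * (t (k-1-1) * Z₄))) := h3.trans (K.mul (K.refl _) h6)
  refine ⟨t (i-1) * (s b * (t (i-1-1) * Z₄)), ?_, ?_⟩
  · exact (K.mul (K.refl (t (i-1))) hq).trans
      (((rw_at (t (i-1) * s b) (s b * Z₄) (rc_tt (k-1) (i-1))).trans
        (rw_at 1 (t (i-1-1) * (s b * Z₄)) (rc_tst (i-1) hb))).trans
        ((rw_at (s b * t (i-1)) Z₄ (rc_tst (i-1-1) hb).symm).trans
          (rw_at (s b) (s b * (t (i-1-1) * Z₄)) (rc_tt (i-1) i))))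
  · exact (K.mul (K.refl (t k * s b)) hZ₁).trans
      ((((rw_at (t k) (t (k-1-1) * Z₄) (rc_tst (k-1) hb).symm).trans
        (rw_at 1 (s b * (t (k-1) * (t (k-1-1) * Z₄))) (rc_tt k i))).trans
        (rw_at (t i * (t (i-1) * s b)) Z₄ (rc_tt (k-1) (i-1)))).trans
        (rw_at (t i) (t (i-1-1) * Z₄) (rc_tst (i-1) hb)))

lemma C8 (hIH : ∀ L' < L, KeyP L') {i j : ℤ} (hij : i ≠ j) {a : Fin 6} (ha : a.val < 3)
    (q Z₁ : W) (hlen : (comp (.inr a) (.inl i) * q).length < L)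
    (H : K (comp (.inr a) (.inl i) * q) (comp (.inr a) (.inl j) * Z₁)) :
    ∃ Z, K (comp (.inl i) (.inr a) * q) (comp (.inl i) (.inl j) * Z) ∧
      K (comp (.inl j) (.inr a) * Z₁) (comp (.inl j) (.inl i) * Z) := by
  rw [comp_rl_lt i ha, mul_assoc] at H hlen
  rw [comp_rl_lt j ha, mul_assoc] at H
  rw [comp_lr_lt i ha, comp_lr_lt j ha, comp_ll hij, comp_ll (Ne.symm hij)]
  obtain ⟨Z₂, h1, h2⟩ := strip hIH hlen H
  rw [comp_ll hij] at h1
  rw [comp_ll (Ne.symm hij)] at h2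
  have e0 := K_length H
  have hlen2 : (s a * q).length < L := by
    simp only [FreeMonoid.length_mul, FreeMonoid.length_of, length_t, length_s] at hlen ⊢
    omega
  obtain ⟨Z₃, h3, h4⟩ := strip hIH hlen2 h1
  rw [comp_rl_lt (i-1) ha, mul_assoc] at h3
  rw [comp_lr_lt (i-1) ha, mul_assoc] at h4
  have h2' : K (s a * Z₁) (t (j-1) * (s a * (t (i-1) * Z₃))) :=
    h2.trans (K.mul (K.refl _) h4)
  have hlen3 : (s a * Z₁).length < L := by
    simp only [FreeMonoid.length_mul, FreeMonoid.length_of, length_t, length_s] at hlen e0 ⊢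
    omega
  obtain ⟨Z₄, h5, h6⟩ := strip hIH hlen3 h2'
  rw [comp_rl_lt (j-1) ha, mul_assoc] at h5
  rw [comp_lr_lt (j-1) ha, mul_assoc] at h6
  have e1 := K_length h3
  have hlen4 : (s a * (t (i-1) * Z₃)).length < L := by
    simp only [FreeMonoid.length_mul, FreeMonoid.length_of, length_t, length_s] at hlen e1 ⊢
    omega
  have hc : K (t (i-1) * Z₃) (t (j-1) * Z₄) := cancel1 hIH hlen4 h6
  have hlen5 : (t (i-1) * Z₃).length < L := by
    simp only [FreeMonoid.length_mul, FreeMonoid.length_of, length_t, length_s] at hlen e1 ⊢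
    omega
  obtain ⟨Z₅, h7, h8⟩ := strip hIH hlen5 hc
  rw [comp_ll (show i - 1 ≠ j - 1 by omega)] at h7
  rw [comp_ll (show j - 1 ≠ i - 1 by omega)] at h8
  have hq : K q (t (i-1) * (s a * (t (i-1-1) * Z₅))) :=
    h3.trans (K.mul (K.refl _) (K.mul (K.refl _) h7))
  have hZ₁ : K Z₁ (t (j-1) * (s a * (t (j-1-1) * Z₅))) :=
    h5.trans (K.mul (K.refl _) (K.mul (K.refl _) h8))
  refine ⟨s a * (t (i-1) * (t (i-1-1) * (s a * Z₅))), ?_, ?_⟩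
  · exact (K.mul (K.refl (s a * t i)) hq).trans
      (((rw_at (s a) (s a * (t (i-1-1) * Z₅)) (rc_tt i (i-1))).trans
        (rw_at (s a * t (i-1)) Z₅ (rc_tst (i-1-1) ha))).trans
        (rw_at 1 (t (i-1-1) * (s a * Z₅)) (rc_tst (i-1) ha).symm))
  · exact (K.mul (K.refl (s a * t j)) hZ₁).trans
      ((((rw_at (s a) (s a * (t (j-1-1) * Z₅)) (rc_tt j (j-1))).trans
        (rw_at (s a * t (j-1)) Z₅ (rc_tst (j-1-1) ha))).trans
        (rw_at 1 (t (j-1-1) * (s a * Z₅)) (rc_tst (j-1) ha).symm)).trans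
        (rw_at (t (j-1) * s a) (s a * Z₅) (rc_tt (j-1) (i-1))))

/-! ### The cube condition -/

lemma cube_lrr (hIH : ∀ L' < L, KeyP L') {i : ℤ} {b c : Fin 6} (hbc : b ≠ c)
    (q Z₁ : W) (hlen : (comp (.inr c) (.inl i) * q).length < L)
    (H : K (comp (.inr c) (.inl i) * q) (comp (.inr c) (.inr b) * Z₁)) :
    ∃ Z, K (comp (.inl i) (.inr c) * q) (comp (.inl i) (.inr b) * Z) ∧
      K (comp (.inr b) (.inr c) * Z₁) (comp (.inr b) (.inl i) * Z) := by
  by_cases hb : b.val < 3 <;> by_cases hc : c.val < 3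
  · exact G5 hIH (braid_TA i hb) (braid_TA i hc) (comm_SS hbc (adjP_low hb hc)) q Z₁ hlen H
  · by_cases hadj : adjP b c
    · exact ((G5 hIH (braid_TA i hb).symm' (braid_SS hadj) (comm_TB i (by omega)) Z₁ q
        ((K_length H) ▸ hlen) H.symm).imp fun Z hz => ⟨hz.2, hz.1⟩)
    · exact G7 hIH (braid_TA i hb) (comm_TB i (by omega)) (comm_SS hbc hadj) q Z₁ hlen H
  · by_cases hadj : adjP b c
    · exact G4 hIH (comm_TB i (by omega)) (braid_TA i hc) (braid_SS hadj) q Z₁ hlen H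
    · exact G6 hIH (comm_TB i (by omega)) (braid_TA i hc) (comm_SS hbc hadj) q Z₁ hlen H
  · exact G1 hIH (comm_TB i (by omega)) (comm_TB i (by omega))
      (comm_SS hbc (adjP_high (by omega) (by omega))) q Z₁ hlen H

lemma cube_rrl (hIH : ∀ L' < L, KeyP L') {a b : Fin 6} (hab : a ≠ b) {k : ℤ}
    (q Z₁ : W) (hlen : (comp (.inl k) (.inr a) * q).length < L)
    (H : K (comp (.inl k) (.inr a) * q) (comp (.inl k) (.inr b) * Z₁)) :
    ∃ Z, K (comp (.inr a) (.inl k) * q) (comp (.inr a) (.inr b) * Z) ∧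
      K (comp (.inr b) (.inl k) * Z₁) (comp (.inr b) (.inr a) * Z) := by
  by_cases ha : a.val < 3 <;> by_cases hb : b.val < 3
  · exact G4 hIH (comm_SS hab (adjP_low ha hb)) (braid_TA k ha).symm'
      (braid_TA k hb).symm' q Z₁ hlen H
  · by_cases hadj : adjP a b
    · exact G5 hIH (braid_SS hadj) (braid_TA k ha).symm'
        (comm_TB k (by omega)).symm' q Z₁ hlen H
    · exact G6 hIH (comm_SS hab hadj) (braid_TA k ha).symm'
        (comm_TB k (by omega)).symm' q Z₁ hlen H
  · by_cases hadj : adjP b a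
    · exact ((G5 hIH (braid_SS hadj) (braid_TA k hb).symm'
        (comm_TB k (by omega)).symm' Z₁ q ((K_length H) ▸ hlen) H.symm).imp
          fun Z hz => ⟨hz.2, hz.1⟩)
    · exact ((G6 hIH (comm_SS (Ne.symm hab) hadj) (braid_TA k hb).symm'
        (comm_TB k (by omega)).symm' Z₁ q ((K_length H) ▸ hlen) H.symm).imp
          fun Z hz => ⟨hz.2, hz.1⟩)
  · exact G1 hIH (comm_SS hab (adjP_high (by omega) (by omega)))
      (comm_TB k (by omega)).symm' (comm_TB k (by omega)).symm' q Z₁ hlen H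

lemma cube_rrr (hIH : ∀ L' < L, KeyP L') {a b c : Fin 6} (hab : a ≠ b) (hac : a ≠ c)
    (hbc : b ≠ c) (q Z₁ : W) (hlen : (comp (.inr c) (.inr a) * q).length < L)
    (H : K (comp (.inr c) (.inr a) * q) (comp (.inr c) (.inr b) * Z₁)) :
    ∃ Z, K (comp (.inr a) (.inr c) * q) (comp (.inr a) (.inr b) * Z) ∧
      K (comp (.inr b) (.inr c) * Z₁) (comp (.inr b) (.inr a) * Z) := by
  by_cases h1 : adjP a b
  · have h2 : ¬ adjP a c := fun h => hbc (adjP_unique h1 h)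
    have h3 : ¬ adjP b c := fun h => hac (adjP_unique (adjP_symm h1) h)
    exact G7 hIH (braid_SS h1) (comm_SS hac h2) (comm_SS hbc h3) q Z₁ hlen H
  · by_cases h2 : adjP a c
    · have h3 : ¬ adjP b c := fun h => hab (adjP_unique (adjP_symm h2) (adjP_symm h))
      exact G6 hIH (comm_SS hab h1) (braid_SS h2) (comm_SS hbc h3) q Z₁ hlen H
    · by_cases h3 : adjP b c
      · exact ((G6 hIH (comm_SS (Ne.symm hab) (fun h => h1 (adjP_symm h)))
          (braid_SS h3) (comm_SS hac h2) Z₁ q ((K_length H) ▸ hlen) H.symm).imp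
            fun Z hz => ⟨hz.2, hz.1⟩)
      · exact G1 hIH (comm_SS hab h1) (comm_SS hac h2) (comm_SS hbc h3) q Z₁ hlen H

lemma cube (hIH : ∀ L' < L, KeyP L') {x y w : S} (hxy : x ≠ y) (hxw : x ≠ w) (hyw : y ≠ w)
    (q Z₁ : W) (hlen : (comp w x * q).length < L) (H : K (comp w x * q) (comp w y * Z₁)) :
    ∃ Z, K (comp x w * q) (comp x y * Z) ∧ K (comp y w * Z₁) (comp y x * Z) := by
  have hlen' : (comp w y * Z₁).length < L := (K_length H) ▸ hlen
  rcases x with i | a <;> rcases y with j | b <;> rcases w with k | c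
  · exact C1 hIH (by simpa using hxy) (by simpa using hxw) (by simpa using hyw) q Z₁ hlen H
  · by_cases hc : c.val < 3
    · exact C8 hIH (by simpa using hxy) hc q Z₁ hlen H
    · exact C15a hIH (by simpa using hxy) (by omega) q Z₁ hlen H
  · by_cases hb : b.val < 3
    · exact C2 hIH (by simpa using hxw) hb q Z₁ hlen H
    · exact C3 hIH (by simpa using hxw) (by omega) q Z₁ hlen H
  · exact cube_lrr hIH (by simpa using hyw) q Z₁ hlen H
  · by_cases ha : a.val < 3
    · exact ((C2 hIH (by simpa using hyw) ha Z₁ q hlen' H.symm).imp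
        fun Z hz => ⟨hz.2, hz.1⟩)
    · exact ((C3 hIH (by simpa using hyw) (by omega) Z₁ q hlen' H.symm).imp
        fun Z hz => ⟨hz.2, hz.1⟩)
  · exact ((cube_lrr hIH (by simpa using hxw) Z₁ q hlen' H.symm).imp
      fun Z hz => ⟨hz.2, hz.1⟩)
  · exact cube_rrl hIH (by simpa using hxy) q Z₁ hlen H
  · exact cube_rrr hIH (by simpa using hxy) (by simpa using hxw) (by simpa using hyw)
      q Z₁ hlen H

end CubeSection

/-! ### The key lemma -/

lemma keyAll : ∀ L, KeyP L := by
  intro L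
  induction L using Nat.strong_induction_on with
  | _ L hIH =>
    intro x X y Y hlen hK
    have hc : Chain (ov x * X) (ov y * Y) := chain_of_K hK
    clear hK
    have main : ∀ u, Chain u (ov y * Y) → ∀ (x : S) (X : W), u = ov x * X →
        u.length = L → ∃ Z, K X (comp x y * Z) ∧ K Y (comp y x * Z) := by
      intro u hu
      induction hu using Relation.ReflTransGen.head_induction_on with
      | refl =>
          intro x X hx hl
          obtain ⟨h1, h2⟩ := cons_inj hx
          subst h1
          subst h2
          exact ⟨Y, by rw [comp_self, one_mul]; exact K.refl _,
            by rw [comp_self, one_mul]; exact K.refl _⟩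
      | head hstep hrest ih =>
          intro x X hx hl
          obtain ⟨r₁, r₂, p, qq, hr, hu, hv⟩ := hstep
          have hrlen : r₁.length = r₂.length := K_length (kStep hr)
          rcases step_decomp hr with heq | ⟨z, w, hzw, hz, hw⟩
          · subst heq
            exact ih x X (by rw [hv, ← hu]; exact hx) (by rw [hv, ← hu]; exact hl)
          · rcases word_cases p with rfl | ⟨d, p', rfl⟩
            · rw [one_mul] at hu hv
              rw [hz, mul_assoc] at hu
              rw [hw, mul_assoc] at hv
              obtain ⟨hxz, hX⟩ := cons_inj (hx.symm.trans hu)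
              subst hxz
              subst hX
              have hl2 : (ov x * (comp x w * qq)).length = L := by
                rw [← hu]; exact hl
              have hrlen2 : (comp x w).length = (comp w x).length := by
                rw [hz, hw] at hrlen
                simp only [FreeMonoid.length_mul, FreeMonoid.length_of] at hrlen
                omega
              have hclen : (ov w * (comp w x * qq)).length = L := by
                simp only [FreeMonoid.length_mul, FreeMonoid.length_of] at hl2 ⊢
                omega
              obtain ⟨Z₁, h1, h2⟩ := ih w (comp w x * qq) hv (by rw [hv]; exact hclen)
              by_cases hwy : w = y
              · subst hwy
                rw [comp_self, one_mul] at h1 h2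
                exact ⟨qq, K.refl _, h2.trans h1.symm⟩
              · by_cases hxey : x = y
                · subst hxey
                  have hlen1 : (FreeMonoid.ofList (comp w x).toList * qq).length < L := by
                    rw [FreeMonoid.ofList_toList]
                    simp only [FreeMonoid.length_mul, FreeMonoid.length_of] at hclen ⊢
                    omega
                  have hql : K qq Z₁ := cancel_list hIH ((comp w x).toList) qq Z₁ hlen1
                    (by rw [FreeMonoid.ofList_toList]; exact h1)
                  refine ⟨comp x w * qq, ?_, ?_⟩
                  · rw [comp_self, one_mul]; exact K.refl _
                  · rw [comp_self, one_mul]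
                    exact h2.trans (K.mul (K.refl _) hql.symm)

                · have hlen' : (comp w x * qq).length < L := by
                    simp only [FreeMonoid.length_mul, FreeMonoid.length_of] at hclen ⊢
                    omega
                  obtain ⟨Z, g1, g2⟩ := cube hIH hxey hzw (fun hh => hwy hh.symm) qq Z₁ hlen' h1
                  exact ⟨Z, g1, h2.trans g2⟩
            · have he : ov x * X = ov d * (p' * (r₁ * qq)) := by
                rw [← hx, hu, mul_assoc, mul_assoc]
              obtain ⟨hxd, hX⟩ := cons_inj he
              subst hxd
              subst hX
              obtain ⟨Z, h1, h2⟩ := ih x (p' * (r₂ * qq))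
                (by rw [hv, mul_assoc, mul_assoc])
                (by rw [hv]
                    rw [hu] at hl
                    simp only [FreeMonoid.length_mul] at hl ⊢
                    omega)
              refine ⟨Z, ?_, h2⟩
              have hstepX : K (p' * (r₁ * qq)) (p' * (r₂ * qq)) :=
                K.mul (K.refl _) (K.mul (kStep hr) (K.refl _))
              exact hstepX.trans h1
    exact main _ hc x X rfl hlen

/-! ### Left and right cancellation on words -/

lemma cancel_letter {a : S} {u v : W} (h : K (ov a * u) (ov a * v)) : K u v := by
  obtain ⟨Z, h1, h2⟩ := keyAll _ a u a v rfl h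
  rw [comp_self, one_mul] at h1 h2
  exact h1.trans h2.symm

lemma left_cancel (p : W) {u v : W} (h : K (p * u) (p * v)) : K u v := by
  have main : ∀ (l : List S) (u v : W),
      K (FreeMonoid.ofList l * u) (FreeMonoid.ofList l * v) → K u v := by
    intro l
    induction l with
    | nil => intro u v h; exact h
    | cons d l ihl =>
        intro u v h
        exact ihl u v (cancel_letter (a := d) h)
  exact main p.toList u v (by rw [FreeMonoid.ofList_toList]; exact h)

/-! ### The reversal anti-automorphism -/

def sig : S → S := fun z => match z with | .inl i => .inl (-i) | .inr a => .inr a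

def phi (u : W) : W := (FreeMonoid.map sig u).reverse

lemma phi_mul (u v : W) : phi (u * v) = phi v * phi u := by
  unfold phi; rw [map_mul, FreeMonoid.reverse_mul]

@[simp] lemma phi_t (i : ℤ) : phi (t i) = t (-i) := rfl
@[simp] lemma phi_s (b : Fin 6) : phi (s b) = s b := rfl

lemma sig_sig (z : S) : sig (sig z) = z := by rcases z with i | a <;> simp [sig]

lemma toList_phi (u : W) : (phi u).toList = (u.toList.map sig).reverse := rfl

lemma phi_phi (u : W) : phi (phi u) = u := by
  apply FreeMonoid.toList.injective
  rw [toList_phi, toList_phi]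
  rw [List.map_reverse, List.reverse_reverse, List.map_map]
  rw [show sig ∘ sig = id from funext sig_sig, List.map_id]

lemma rels_phi {a b : W} (h : rels a b) : K (phi a) (phi b) := by
  rcases h with ⟨i, j, hj, ha, hb⟩ | ⟨i, j, ha, hb⟩ | ⟨p, hp, ha, hb⟩ |
    ⟨i, j, hne, h1, h2, ha, hb⟩ | ⟨i, j, hj, ha, hb⟩ <;> subst ha <;> subst hb <;>
    simp only [phi_mul, phi_t, phi_s]
  · exact rc_tst (-i) hj
  · have e : ∀ m : ℤ, -(m-1) - 1 = -m := fun m => by ring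
    have h := rc_tt (-(i-1)) (-(j-1))
    rw [e i, e j] at h
    exact h
  · exact rc_ss_braid (Or.inl hp)
  · exact rc_ss_comm (Ne.symm hne) (fun h => (h.elim h2 h1))
  · exact (rc_ts (-i) hj).symm

lemma K_phi {u v : W} (h : K u v) : K (phi u) (phi v) := by
  have h' : ConGen.Rel rels u v := h
  clear h
  induction h' with
  | of a b hab => exact rels_phi hab
  | refl x => exact K.refl _
  | symm _ ih => exact ih.symm
  | trans _ _ ih1 ih2 => exact ih1.trans ih2
  | mul _ _ ih1 ih2 =>
      rw [phi_mul, phi_mul]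
      exact K.mul ih2 ih1

lemma right_cancel (p : W) {u v : W} (h : K (u * p) (v * p)) : K u v := by
  have h2 : K (phi p * phi u) (phi p * phi v) := by
    rw [← phi_mul, ← phi_mul]; exact K_phi h
  have h3 := K_phi (left_cancel _ h2)
  rw [phi_phi, phi_phi] at h3
  exact h3

theorem cancellative :
    ∀ u v w : M, (u * v = u * w → v = w) ∧ (v * u = w * u → v = w) := by
  intro u v w
  obtain ⟨a⟩ := u
  obtain ⟨b⟩ := v
  obtain ⟨c⟩ := w
  constructor
  · intro h
    have hk : K (a * b) (a * c) := (Con.eq _).mp h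
    exact (Con.eq _).mpr (left_cancel a hk)
  · intro h
    have hk : K (b * a) (c * a) := (Con.eq _).mp h
    exact (Con.eq _).mpr (right_cancel a hk)

end EllipticE6Monoid
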